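/- If S is uniformly distributed on a finite set of size M and independent of a random variable J, and G is any random variable taking values in the same set of size M, then the one-time-pad output S ⊕ G (addition modulo M) together with J leaks about S at most I(J, S⊕G; S) ≤ log M − H(G) + I(J; G). -/

import Mathlib

open scoped BigOperators Classical

noncomputable section

/-- A probability distribution on a finite sample space. -/
structure FinProb (Ω : Type*) [Fintype Ω] where
  p : Ω → ℝ
  nonneg : ∀ ω, 0 ≤ p ω
  sum_one : ∑ ω, p ω = 1

variable {Ω : Type*} [Fintype Ω]

/-- Probability of an event. -/
def FinProb.pr (μ : FinProb Ω) (E : Set Ω) : ℝ :=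
  ∑ ω, if ω ∈ E then μ.p ω else 0

/-- Distribution (pmf) of a random variable. -/
def dist {A : Type*} [Fintype A] (μ : FinProb Ω) (X : Ω → A) (a : A) : ℝ :=
  ∑ ω, if X ω = a then μ.p ω else 0

/-- Shannon entropy (in bits) of a finite-valued random variable. -/
def Hent {A : Type*} [Fintype A] (μ : FinProb Ω) (X : Ω → A) : ℝ :=
  ∑ a, -(dist μ X a * Real.logb 2 (dist μ X a))

/-- Conditional entropy H(X|Y) (in bits). -/
def Hcond {A B : Type*} [Fintype A] [Fintype B] (μ : FinProb Ω) (X : Ω → A) (Y : Ω → B) : ℝ :=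
  Hent μ (fun ω => (X ω, Y ω)) - Hent μ Y

/-- Mutual information I(X;Y) (in bits). -/
def MuI {A B : Type*} [Fintype A] [Fintype B] (μ : FinProb Ω) (X : Ω → A) (Y : Ω → B) : ℝ :=
  Hent μ X + Hent μ Y - Hent μ (fun ω => (X ω, Y ω))

/-- Independence of two random variables. -/
def IndepRV {A B : Type*} [Fintype A] [Fintype B] (μ : FinProb Ω) (X : Ω → A) (Y : Ω → B) : Prop :=
  ∀ a b, dist μ (fun ω => (X ω, Y ω)) (a, b) = dist μ X a * dist μ Y b

/-- A random variable is uniformly distributed. -/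
def Uniform {A : Type*} [Fintype A] (μ : FinProb Ω) (X : Ω → A) : Prop :=
  ∀ a, dist μ X a = 1 / (Fintype.card A : ℝ)

/-- Markov chain X − Y − Z: X and Z conditionally independent given Y. -/
def Markov {A B C : Type*} [Fintype A] [Fintype B] [Fintype C]
    (μ : FinProb Ω) (X : Ω → A) (Y : Ω → B) (Z : Ω → C) : Prop :=
  ∀ a b c, dist μ (fun ω => (X ω, Y ω, Z ω)) (a, b, c) * dist μ Y b =
    dist μ (fun ω => (X ω, Y ω)) (a, b) * dist μ (fun ω => (Y ω, Z ω)) (b, c)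

/-- Markov chain Z − X − Y − U of length four. -/
def Markov4 {A B C D : Type*} [Fintype A] [Fintype B] [Fintype C] [Fintype D]
    (μ : FinProb Ω) (Z : Ω → A) (X : Ω → B) (Y : Ω → C) (U : Ω → D) : Prop :=
  Markov μ Z X (fun ω => (Y ω, U ω)) ∧ Markov μ (fun ω => (Z ω, X ω)) Y U

/-- The process `Y` is i.i.d. -/
def IID {n : ℕ} {A : Type*} [Fintype A] (μ : FinProb Ω) (Y : Fin n → Ω → A) : Prop :=
  (∀ y : Fin n → A, dist μ (fun ω t => Y t ω) y = ∏ t, dist μ (Y t) (y t)) ∧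
  (∀ t t' a, dist μ (Y t) a = dist μ (Y t') a)

/-- The prefix (Y_1, …, Y_{t-1}) of a process, as a single random variable. -/
def prefixRV {n : ℕ} {A : Type*} (Y : Fin n → Ω → A) (t : Fin n) : Ω → (Fin t.1 → A) :=
  fun ω s => Y (Fin.castLE t.isLt.le s) ω

end

noncomputable section OTPAux

variable {Ω : Type*} [Fintype Ω] {A B : Type*} [Fintype A] [Fintype B]

lemma otp_dist_nonneg (μ : FinProb Ω) (X : Ω → A) (a : A) : 0 ≤ _root_.dist μ X a :=
  Finset.sum_nonneg fun ω _ => by split_ifs <;> simp [μ.nonneg]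

lemma otp_sum_dist (μ : FinProb Ω) (X : Ω → A) : ∑ a, _root_.dist μ X a = 1 := by
  unfold _root_.dist
  rw [Finset.sum_comm, ← μ.sum_one]
  exact Finset.sum_congr rfl fun ω _ => by simp

lemma otp_dist_fst (μ : FinProb Ω) (X : Ω → A) (Y : Ω → B) (a : A) :
    _root_.dist μ X a = ∑ b, _root_.dist μ (fun ω => (X ω, Y ω)) (a, b) := by
  unfold _root_.dist
  rw [Finset.sum_comm]
  refine Finset.sum_congr rfl fun ω _ => ?_
  by_cases h : X ω = a <;> simp [h, Prod.ext_iff]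

lemma otp_dist_equiv (μ : FinProb Ω) (X : Ω → A) (e : A ≃ B) (b : B) :
    _root_.dist μ (fun ω => e (X ω)) b = _root_.dist μ X (e.symm b) := by
  unfold _root_.dist
  refine Finset.sum_congr rfl fun ω _ => ?_
  simp [Equiv.apply_eq_iff_eq_symm_apply]

lemma otp_hent_equiv (μ : FinProb Ω) (X : Ω → A) (e : A ≃ B) :
    Hent μ (fun ω => e (X ω)) = Hent μ X := by
  unfold Hent
  simp only [otp_dist_equiv]
  exact Fintype.sum_equiv e.symm _ _ fun b => rfl

lemma otp_hent_indep (μ : FinProb Ω) (X : Ω → A) (Y : Ω → B) (h : IndepRV μ X Y) :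
    Hent μ (fun ω => (X ω, Y ω)) = Hent μ X + Hent μ Y := by
  unfold Hent
  rw [Fintype.sum_prod_type]
  have key : ∀ a b, -(_root_.dist μ (fun ω => (X ω, Y ω)) (a, b) *
        Real.logb 2 (_root_.dist μ (fun ω => (X ω, Y ω)) (a, b)))
      = _root_.dist μ Y b * -(_root_.dist μ X a * Real.logb 2 (_root_.dist μ X a)) +
        _root_.dist μ X a * -(_root_.dist μ Y b * Real.logb 2 (_root_.dist μ Y b)) := by
    intro a b
    rw [h a b]
    rcases eq_or_ne (_root_.dist μ X a) 0 with hp | hp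
    · simp [hp]
    rcases eq_or_ne (_root_.dist μ Y b) 0 with hq | hq
    · simp [hq]
    rw [Real.logb_mul hp hq]; ring
  simp only [key]
  calc ∑ a, ∑ b, (_root_.dist μ Y b * -(_root_.dist μ X a * Real.logb 2 (_root_.dist μ X a)) +
        _root_.dist μ X a * -(_root_.dist μ Y b * Real.logb 2 (_root_.dist μ Y b)))
      = ∑ a, (-(_root_.dist μ X a * Real.logb 2 (_root_.dist μ X a)) +
        _root_.dist μ X a * ∑ b, -(_root_.dist μ Y b * Real.logb 2 (_root_.dist μ Y b))) := by
        refine Finset.sum_congr rfl fun a _ => ?_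
        rw [Finset.sum_add_distrib, ← Finset.sum_mul, otp_sum_dist μ Y, one_mul,
          ← Finset.mul_sum]
    _ = ∑ a, -(_root_.dist μ X a * Real.logb 2 (_root_.dist μ X a)) +
        ∑ b, -(_root_.dist μ Y b * Real.logb 2 (_root_.dist μ Y b)) := by
        rw [Finset.sum_add_distrib, ← Finset.sum_mul, otp_sum_dist μ X, one_mul]

lemma otp_hent_eq_log (μ : FinProb Ω) (X : Ω → A) :
    Hent μ X = (∑ a, -(_root_.dist μ X a * Real.log (_root_.dist μ X a))) / Real.log 2 := by
  unfold Hent Real.logb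
  rw [Finset.sum_div]
  exact Finset.sum_congr rfl fun a _ => by ring

/-- Pure-real core inequality. -/
lemma otp_core (r : A × B → ℝ) (p : A → ℝ)
    (hr : ∀ ab, 0 ≤ r ab)
    (hmarg : ∀ a, p a = ∑ b, r (a, b))
    (hsum : ∑ ab : A × B, r ab = 1)
    (hpsum : ∑ a, p a = 1)
    (hN : (0 : ℝ) < Fintype.card B) :
    ∑ ab : A × B, -(r ab * Real.log (r ab)) ≤
      ∑ a, -(p a * Real.log (p a)) + Real.log (Fintype.card B) := by
  set N : ℝ := (Fintype.card B : ℝ) with hNdef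
  have hpnn : ∀ a, 0 ≤ p a := fun a => by
    rw [hmarg a]; exact Finset.sum_nonneg fun b _ => hr _
  have key : ∀ a b, -(r (a, b) * Real.log (r (a, b))) ≤
      -(r (a, b) * Real.log (p a)) + r (a, b) * Real.log N + (p a / N - r (a, b)) := by
    intro a b
    rcases (hr (a, b)).eq_or_lt with h0 | h0
    · rw [← h0]
      have h1 : 0 ≤ p a / N := div_nonneg (hpnn a) hN.le
      simp
      linarith
    · have hle : r (a, b) ≤ p a := by
        rw [hmarg a]
        exact Finset.single_le_sum (fun b _ => hr _) (Finset.mem_univ b)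
      have hp0 : 0 < p a := lt_of_lt_of_le h0 hle
      have h2 := Real.log_le_sub_one_of_pos (show (0:ℝ) < p a / (N * r (a, b)) by positivity)
      have h1 : Real.log (p a / (N * r (a, b))) =
          Real.log (p a) - Real.log N - Real.log (r (a, b)) := by
        rw [Real.log_div hp0.ne' (by positivity), Real.log_mul hN.ne' h0.ne']
        ring
      rw [h1] at h2
      have h3 := mul_le_mul_of_nonneg_left h2 h0.le
      have h4 : r (a, b) * (p a / (N * r (a, b)) - 1) = p a / N - r (a, b) := by
        field_simp
      rw [h4] at h3
      nlinarith [h3]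
  have hbig : ∑ ab : A × B,
      (-(r ab * Real.log (p ab.1)) + r ab * Real.log N + (p ab.1 / N - r ab))
      = ∑ a, -(p a * Real.log (p a)) + Real.log N := by
    rw [Finset.sum_add_distrib, Finset.sum_add_distrib, Finset.sum_sub_distrib]
    have e1 : ∑ ab : A × B, -(r ab * Real.log (p ab.1)) = ∑ a, -(p a * Real.log (p a)) := by
      rw [Fintype.sum_prod_type]
      refine Finset.sum_congr rfl fun a _ => ?_
      dsimp only
      rw [Finset.sum_neg_distrib, ← Finset.sum_mul, ← hmarg a]
    have e2 : ∑ ab : A × B, r ab * Real.log N = Real.log N := by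
      rw [← Finset.sum_mul, hsum, one_mul]
    have e3 : ∑ ab : A × B, p ab.1 / N = 1 := by
      rw [Fintype.sum_prod_type]
      dsimp only
      simp only [Finset.sum_const, Finset.card_univ, nsmul_eq_mul]
      have hc : ∀ a, (Fintype.card B : ℝ) * (p a / N) = p a := fun a => by
        rw [hNdef]; field_simp; exact mul_div_cancel_left₀ _ (by rw [← hNdef]; exact hN.ne')
      simp only [hc]
      exact hpsum
    rw [e1, e2, e3, hsum]
    ring
  calc ∑ ab : A × B, -(r ab * Real.log (r ab))
      ≤ ∑ ab : A × B,
        (-(r ab * Real.log (p ab.1)) + r ab * Real.log N + (p ab.1 / N - r ab)) :=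
        Finset.sum_le_sum fun ab _ => key ab.1 ab.2
    _ = ∑ a, -(p a * Real.log (p a)) + Real.log N := hbig

lemma otp_hent_pair_le (μ : FinProb Ω) (X : Ω → A) (Y : Ω → B) :
    Hent μ (fun ω => (X ω, Y ω)) ≤ Hent μ X + Real.logb 2 (Fintype.card B) := by
  have hΩ : Nonempty Ω := by
    by_contra h
    rw [not_nonempty_iff] at h
    have h1 := μ.sum_one
    rw [@Finset.univ_eq_empty _ _ h, Finset.sum_empty] at h1
    norm_num at h1
  have hB : Nonempty B := ⟨Y (Classical.arbitrary Ω)⟩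
  have hN : (0 : ℝ) < Fintype.card B := by exact_mod_cast Fintype.card_pos
  have hmain := otp_core (_root_.dist μ (fun ω => (X ω, Y ω))) (_root_.dist μ X)
    (otp_dist_nonneg μ _) (otp_dist_fst μ X Y) (otp_sum_dist μ _) (otp_sum_dist μ _) hN
  have hlog2 : (0:ℝ) < Real.log 2 := Real.log_pos (by norm_num)
  calc Hent μ (fun ω => (X ω, Y ω))
      = (∑ ab : A × B, -(_root_.dist μ (fun ω => (X ω, Y ω)) ab *
          Real.log (_root_.dist μ (fun ω => (X ω, Y ω)) ab))) / Real.log 2 :=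
        otp_hent_eq_log μ _
    _ ≤ (∑ a, -(_root_.dist μ X a * Real.log (_root_.dist μ X a)) +
          Real.log (Fintype.card B)) / Real.log 2 := by
        apply (div_le_div_iff_of_pos_right hlog2).mpr hmain
    _ = (∑ a, -(_root_.dist μ X a * Real.log (_root_.dist μ X a))) / Real.log 2 +
          Real.logb 2 (Fintype.card B) := by
        rw [add_div]; rfl
    _ = Hent μ X + Real.logb 2 (Fintype.card B) := by rw [otp_hent_eq_log μ X]

lemma otp_hent_uniform (μ : FinProb Ω) (X : Ω → A) (h : Uniform μ X) :
    Hent μ X = Real.logb 2 (Fintype.card A) := by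
  unfold Hent
  have h' : ∀ a, _root_.dist μ X a = 1 / (Fintype.card A : ℝ) := h
  simp only [h']
  rw [Finset.sum_const, Finset.card_univ, nsmul_eq_mul]
  rcases Nat.eq_zero_or_pos (Fintype.card A) with hc | hc
  · simp [hc]
  · have hc' : (Fintype.card A : ℝ) ≠ 0 := by positivity
    rw [one_div, Real.logb_inv]
    field_simp

def otpEquiv (M : ℕ) (J : Type*) : ZMod M × (J × ZMod M) ≃ (J × ZMod M) × ZMod M where
  toFun x := ((x.2.1, x.1 + x.2.2), x.1)
  invFun y := (y.2, (y.1.1, y.1.2 - y.2))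
  left_inv x := by simp
  right_inv y := by simp

end OTPAux

/-- One-time-pad secrecy-leakage bound: I(J, S⊕G; S) ≤ log M − H(G) + I(J; G). -/
theorem otp_secrecy_leakage {Ω J : Type*} [Fintype Ω] [Fintype J] (μ : FinProb Ω)
    (M : ℕ) [NeZero M] (S G : Ω → ZMod M) (Jv : Ω → J)
    (hunif : Uniform μ S)
    (hind : IndepRV μ S (fun ω => (Jv ω, G ω))) :
    MuI μ (fun ω => (Jv ω, S ω + G ω)) S ≤
      Real.logb 2 M - Hent μ G + MuI μ Jv G := by
  have h1 : Hent μ (fun ω => ((Jv ω, S ω + G ω), S ω)) =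
      Hent μ (fun ω => (S ω, (Jv ω, G ω))) :=
    otp_hent_equiv μ (fun ω => (S ω, (Jv ω, G ω))) (otpEquiv M J)
  have h2 : Hent μ (fun ω => (S ω, (Jv ω, G ω))) =
      Hent μ S + Hent μ (fun ω => (Jv ω, G ω)) :=
    otp_hent_indep μ S (fun ω => (Jv ω, G ω)) hind
  have hS : Hent μ S = Real.logb 2 M := by
    rw [otp_hent_uniform μ S hunif, ZMod.card]
  have h3 : Hent μ (fun ω => (Jv ω, S ω + G ω)) ≤ Hent μ Jv + Real.logb 2 M := by
    have h := otp_hent_pair_le μ Jv (fun ω => S ω + G ω)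
    rwa [ZMod.card] at h
  simp only [MuI]
  linarith [h1, h2, hS, h3]
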